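/- Let m be a real number with m < 0 and let u ∈ ℝ³ with u ≠ 0. Set M = -m·(1 + ‖u‖/2). Then M > 0, the fused mass m_c = m + M equals -m·‖u‖/2 > 0, and the unique v_c satisfying m_c · v_c = m·u + M·0 is v_c = -2u/‖u‖, so ‖v_c‖ = 2 > 1. (This is the computation underlying Proposition 2: colliding a moving negative-mass particle with a suitably chosen stationary positive-mass particle yields a particle of speed exactly 2.) -/

import Mathlib

/-- Computation underlying Proposition 2: colliding a moving negative-mass
particle `(m, u)` with a stationary particle of mass `M = -m·(1 + ‖u‖/2)`
yields a fused mass `m + M = -m·‖u‖/2 > 0` and the unique `v_c` with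
`(m+M)·v_c = m·u` is `v_c = -2u/‖u‖`, of norm `2 > 1`. -/
theorem stmt_9 (m : ℝ) (hm : m < 0) (u : EuclideanSpace ℝ (Fin 3))
    (hu : u ≠ 0) (M : ℝ) (hM : M = -m * (1 + ‖u‖ / 2)) :
    M > 0 ∧
    m + M = -m * ‖u‖ / 2 ∧
    -m * ‖u‖ / 2 > 0 ∧
    (∀ vc : EuclideanSpace ℝ (Fin 3),
        (m + M) • vc = m • u + M • (0 : EuclideanSpace ℝ (Fin 3)) ↔
        vc = -((2 / ‖u‖) • u)) ∧
    ‖-((2 / ‖u‖) • u)‖ = 2 ∧ (2 : ℝ) > 1 := by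
  have hnu : (0:ℝ) < ‖u‖ := norm_pos_iff.mpr hu
  have hsum : m + M = -m * ‖u‖ / 2 := by rw [hM]; ring
  have hm0 : m ≠ 0 := ne_of_lt hm
  have hpos : -m * ‖u‖ / 2 > 0 := by nlinarith
  refine ⟨by nlinarith, hsum, hpos, ?_, ?_, by norm_num⟩
  · intro vc
    rw [smul_zero, add_zero, hsum]
    constructor
    · intro h
      have h2 : vc = (-m * ‖u‖ / 2)⁻¹ • (m • u) := by
        rw [← h, inv_smul_smul₀ (ne_of_gt hpos)]
      rw [h2, smul_smul, ← neg_smul]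
      congr 1
      field_simp
    · intro h
      rw [h, smul_neg, smul_smul, ← neg_smul]
      congr 1
      field_simp
  · rw [norm_neg, norm_smul, Real.norm_eq_abs, abs_div]
    rw [abs_of_pos hnu]
    field_simp
    norm_num
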